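/- Let B be a spherical building and let A ⊆ B be an apartment. If every panel a ∈ A is contained in at least three distinct chambers of B, then B is thick. -/

import Mathlib

/-!
Buildings in their `W`-metric (chamber system) formulation: a building of type `(W, I)`
is a set `C` of chambers with a Weyl-group–valued distance function `δ : C → C → W`.
-/

section Buildings

variable {I W : Type*} [Group W]

/-- The `W`-metric axioms for a building of type `(W, I)` with chamber set `C` and
Weyl distance `δ`. -/
structure IsBuilding {C : Type*} (M : CoxeterMatrix I) (cs : CoxeterSystem M W)
    (δ : C → C → W) : Prop where
  eq_one_iff : ∀ c d : C, δ c d = 1 ↔ c = d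
  symm : ∀ c d : C, δ d c = (δ c d)⁻¹
  wd2 : ∀ (c d d' : C) (i : I), δ d d' = cs.simple i →
    δ c d' = δ c d * cs.simple i ∨ δ c d' = δ c d
  wd2' : ∀ (c d d' : C) (i : I), δ d d' = cs.simple i →
    cs.length (δ c d * cs.simple i) = cs.length (δ c d) + 1 →
    δ c d' = δ c d * cs.simple i
  wd3 : ∀ (c d : C) (i : I), ∃ d' : C, δ d d' = cs.simple i ∧ δ c d' = δ c d * cs.simple i

variable {C : Type*} {M : CoxeterMatrix I} (cs : CoxeterSystem M W) (δ : C → C → W)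

/-- The set of chambers containing the `i`-panel of the chamber `c`
(the residue of that panel). -/
def panelRes (i : I) (c : C) : Set C :=
  {d : C | δ c d = 1 ∨ δ c d = cs.simple i}

/-- The building is thick: every panel is contained in at least three chambers. -/
def IsThickBuilding : Prop :=
  ∀ (i : I) (c : C), ∃ d₁ d₂ d₃ : C, d₁ ≠ d₂ ∧ d₁ ≠ d₃ ∧ d₂ ≠ d₃ ∧
    d₁ ∈ panelRes cs δ i c ∧ d₂ ∈ panelRes cs δ i c ∧ d₃ ∈ panelRes cs δ i c

/-- An apartment: a set of chambers on which `δ` restricts to the `W`-metric of the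
Coxeter complex of `W`. -/
def IsBuildingApartment (A : Set C) : Prop :=
  ∃ α : W → C, (∀ w w' : W, δ (α w) (α w') = w⁻¹ * w') ∧ A = Set.range α

/-- The residue of the simplex of cotype `J` of the chamber `c`: all chambers containing
that simplex. -/
def simplexRes (J : Set I) (c : C) : Set C :=
  {d : C | δ c d ∈ Subgroup.closure (cs.simple '' J)}

end Buildings


namespace ThickAux

noncomputable section
open scoped Classical

open List CoxeterSystem

variable {I W : Type*} [Group W] {M : CoxeterMatrix I} (cs : CoxeterSystem M W)

local prefix:100 "s" => cs.simple
local prefix:100 "π" => cs.wordProd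
local prefix:100 "ℓ" => cs.length

/-- The basic step function for the reflection cocycle. -/
def step (i : I) : Function.End (W × ZMod 2) :=
  fun p => (cs.simple i * p.1 * cs.simple i, p.2 + if p.1 = cs.simple i then 1 else 0)

/-- Product of steps over a word. -/
def stepWord (ω : List I) : Function.End (W × ZMod 2) := (ω.map (step cs)).prod

@[simp] lemma stepWord_nil : stepWord cs [] = 1 := rfl

lemma stepWord_cons (i : I) (ω : List I) :
    stepWord cs (i :: ω) = step cs i * stepWord cs ω := by
  simp [stepWord]

lemma stepWord_apply (ω : List I) (t : W) (ε : ZMod 2) :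
    stepWord cs ω (t, ε) =
      (π ω * t * (π ω)⁻¹, ε + ((cs.rightInvSeq ω).count t : ZMod 2)) := by
  induction ω with
  | nil =>
    show (t, ε) = _
    simp
  | cons i ω ih =>
    have hstep : stepWord cs (i :: ω) (t, ε) = step cs i (stepWord cs ω (t, ε)) := rfl
    rw [hstep, ih]
    show (s i * (π ω * t * (π ω)⁻¹) * s i,
        (ε + ((cs.rightInvSeq ω).count t : ZMod 2)) +
          if π ω * t * (π ω)⁻¹ = s i then 1 else 0) = _
    have hcond : ((π ω)⁻¹ * s i * π ω = t) ↔ (π ω * t * (π ω)⁻¹ = s i) := by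
      constructor
      · intro h; rw [← h]; group
      · intro h; rw [← h]; group
    have hris : cs.rightInvSeq (i :: ω) = ((π ω)⁻¹ * s i * π ω) :: cs.rightInvSeq ω := rfl
    have hcount : (cs.rightInvSeq (i :: ω)).count t
        = (cs.rightInvSeq ω).count t + (if π ω * t * (π ω)⁻¹ = s i then 1 else 0) := by
      rw [hris, List.count_cons]
      congr 1
      simp only [beq_iff_eq]
      exact if_congr hcond rfl rfl
    refine Prod.ext ?_ ?_
    · show s i * (π ω * t * (π ω)⁻¹) * s i = π (i :: ω) * t * (π (i :: ω))⁻¹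
      rw [cs.wordProd_cons]
      simp [mul_inv_rev, cs.inv_simple, mul_assoc]
    · show (ε + ((cs.rightInvSeq ω).count t : ZMod 2)) +
          (if π ω * t * (π ω)⁻¹ = s i then 1 else 0)
        = ε + ((cs.rightInvSeq (i :: ω)).count t : ZMod 2)
      rw [hcount]
      push_cast
      ring


lemma drop_alternatingWord (i j : I) : ∀ (d n : ℕ), d ≤ n →
    (alternatingWord i j n).drop d = alternatingWord i j (n - d) := by
  intro d
  induction d with
  | zero => intro n _; simp
  | succ d ih =>
    intro n hd
    match n, hd with
    | (n' + 1), hd =>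
      rw [alternatingWord_succ' i j n', List.drop_succ_cons, ih n' (by omega)]
      congr 1
      omega

lemma getD_ris_eq (ω : List I) (k : ℕ) (hk : k < ω.length) :
    (cs.rightInvSeq ω).getD k 1 = (π (ω.drop (k + 1)))⁻¹ * π (ω.drop k) := by
  rw [cs.getD_rightInvSeq]
  have h1 : ω[k] :: ω.drop (k + 1) = ω.drop k := List.getElem_cons_drop hk
  have h2 : π (ω.drop k) = s (ω[k]) * π (ω.drop (k + 1)) := by
    rw [← h1, cs.wordProd_cons]
  have h3 : ω[k]? = some (ω[k]) := by
    rw [List.getElem?_eq_getElem hk]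
  rw [h3, h2]
  simp [mul_assoc]

lemma pi_alt_even (i j : I) (q : ℕ) :
    π (alternatingWord i j (2 * q)) = (s i * s j) ^ q := by
  rw [cs.prod_alternatingWord_eq_mul_pow, if_pos (even_two_mul q),
    Nat.mul_div_cancel_left q (by norm_num), one_mul]

lemma pi_alt_odd (i j : I) (q : ℕ) :
    π (alternatingWord i j (2 * q + 1)) = s j * (s i * s j) ^ q := by
  have hq : (2 * q + 1) / 2 = q := by omega
  rw [cs.prod_alternatingWord_eq_mul_pow, if_neg (by simp [Nat.even_add_one, parity_simps]), hq]

lemma alt_step_period (i j : I) (r : ℕ) :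
    (π (alternatingWord i j (r + M i j)))⁻¹ * π (alternatingWord i j (r + M i j + 1))
      = (π (alternatingWord i j r))⁻¹ * π (alternatingWord i j (r + 1)) := by
  set m := M i j with hm
  set g := s i * s j with hgdef
  have hg : g ^ m = 1 := cs.simple_mul_simple_pow i j
  have hgz : g ^ (m : ℤ) = 1 := by rw [zpow_natCast, hg]
  have hcz : ∀ a : ℤ, s j * g ^ a * s j = g ^ (-a) := by
    intro a
    have h1 : s j * g * (s j)⁻¹ = g⁻¹ := by
      rw [cs.inv_simple, hgdef]
      calc s j * (s i * s j) * s j = s j * s i * (s j * s j) := by group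
        _ = s j * s i := by rw [cs.simple_mul_simple_self, mul_one]
        _ = (s i * s j)⁻¹ := by rw [mul_inv_rev, cs.inv_simple, cs.inv_simple]
    calc s j * g ^ a * s j = s j * g ^ a * (s j)⁻¹ := by rw [cs.inv_simple]
      _ = (s j * g * (s j)⁻¹) ^ a := by rw [conj_zpow]
      _ = (g⁻¹) ^ a := by rw [h1]
      _ = g ^ (-a) := by rw [inv_zpow, zpow_neg]
  have key : ∀ A A' B B' : ℤ, A - A' + (B - B') = (m : ℤ) →
      g ^ (-A) * s j * g ^ B = g ^ (-A') * s j * g ^ B' := by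
    intro A A' B B' h
    have e1 : g ^ (B - B') = g ^ (A' - A) := by
      have h2 : (B - B') = (A' - A) + (A - A' + (B - B')) := by ring
      rw [h2, zpow_add, h, hgz, mul_one]
    have e2 : s j * g ^ (A' - A) = g ^ (A - A') * s j := by
      calc s j * g ^ (A' - A) = (s j * g ^ (A' - A) * s j) * s j := by
            rw [cs.simple_mul_simple_cancel_right]
        _ = g ^ (-(A' - A)) * s j := by rw [hcz]
        _ = g ^ (A - A') * s j := by ring_nf
    calc g ^ (-A) * s j * g ^ B
        = g ^ (-A') * (g ^ (A' - A) * s j * g ^ (B - B')) * g ^ B' := by group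
      _ = g ^ (-A') * (g ^ (A' - A) * s j * g ^ (A' - A)) * g ^ B' := by rw [e1]
      _ = g ^ (-A') * (g ^ (A' - A) * (g ^ (A - A') * s j)) * g ^ B' := by
          rw [mul_assoc (g ^ (A' - A)), e2]
      _ = g ^ (-A') * s j * g ^ B' := by group
  have conv1 : ∀ a b : ℕ, ((g : W) ^ a)⁻¹ * (s j * g ^ b) = g ^ (-(a:ℤ)) * s j * g ^ (b:ℤ) := by
    intro a b
    rw [zpow_neg, zpow_natCast, zpow_natCast, mul_assoc]
  have conv2 : ∀ a b : ℕ, (s j * (g : W) ^ a)⁻¹ * g ^ b = g ^ (-(a:ℤ)) * s j * g ^ (b:ℤ) := by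
    intro a b
    rw [mul_inv_rev, cs.inv_simple, zpow_neg, zpow_natCast, zpow_natCast]
  rcases Nat.even_or_odd m with ⟨p, hp⟩ | ⟨p, hp⟩ <;>
    rcases Nat.even_or_odd r with ⟨q, hq⟩ | ⟨q, hq⟩
  · -- m = p + p, r = q + q
    have h1 : r + m = 2 * (q + p) := by omega
    have h2 : r + m + 1 = 2 * (q + p) + 1 := by omega
    have h3 : r = 2 * q := by omega
    have h4 : r + 1 = 2 * q + 1 := by omega
    rw [h1, h3, pi_alt_even, pi_alt_odd, pi_alt_even, pi_alt_odd, ← hgdef, conv1, conv1]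
    apply key
    push_cast; omega
  · -- m = p + p, r = 2q+1
    have h1 : r + m = 2 * (q + p) + 1 := by omega
    have h2 : r + m + 1 = 2 * (q + p + 1) := by omega
    have h3 : r = 2 * q + 1 := by omega
    have h4 : r + 1 = 2 * (q + 1) := by omega
    have e1 : 2 * (q + p) + 1 + 1 = 2 * (q + p + 1) := by ring
    have e2 : 2 * q + 1 + 1 = 2 * (q + 1) := by ring
    rw [h1, h3, e1, e2, pi_alt_even, pi_alt_odd, pi_alt_even, pi_alt_odd, ← hgdef, conv2, conv2]
    apply key
    push_cast; omega
  · -- m = 2p+1, r = q + q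
    have h1 : r + m = 2 * (q + p) + 1 := by omega
    have h2 : r + m + 1 = 2 * (q + p + 1) := by omega
    have h3 : r = 2 * q := by omega
    have h4 : r + 1 = 2 * q + 1 := by omega
    have e1 : 2 * (q + p) + 1 + 1 = 2 * (q + p + 1) := by ring
    rw [h1, h3, e1, pi_alt_even, pi_alt_odd, pi_alt_even, pi_alt_odd, ← hgdef, conv2, conv1]
    apply key
    push_cast; omega
  · -- m = 2p+1, r = 2q+1
    have h1 : r + m = 2 * (q + p + 1) := by omega
    have h2 : r + m + 1 = 2 * (q + p + 1) + 1 := by omega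
    have h3 : r = 2 * q + 1 := by omega
    have h4 : r + 1 = 2 * (q + 1) := by omega
    have e2 : 2 * q + 1 + 1 = 2 * (q + 1) := by ring
    rw [h1, h3, e2, pi_alt_even, pi_alt_odd, pi_alt_even, pi_alt_odd, ← hgdef, conv1, conv2]
    apply key
    push_cast; omega


lemma count_ris_alt_even (i j : I) (t : W) :
    Even ((cs.rightInvSeq (alternatingWord i j (2 * M i j))).count t) := by
  set m := M i j with hm
  set ω := alternatingWord i j (2 * m) with hω
  have hlω : ω.length = 2 * m := by rw [hω, length_alternatingWord]
  set R := cs.rightInvSeq ω with hR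
  have hlenR : R.length = 2 * m := by rw [hR, cs.length_rightInvSeq, hlω]
  have hpair : ∀ k, k < m → R.getD (k + m) 1 = R.getD k 1 := by
    intro k hk
    rw [hR, getD_ris_eq cs ω (k + m) (by omega), getD_ris_eq cs ω k (by omega)]
    rw [hω, drop_alternatingWord i j (k + m + 1) (2 * m) (by omega),
      drop_alternatingWord i j (k + m) (2 * m) (by omega),
      drop_alternatingWord i j (k + 1) (2 * m) (by omega),
      drop_alternatingWord i j k (2 * m) (by omega)]
    have e1 : 2 * m - (k + m + 1) = m - k - 1 := by omega
    have e2 : 2 * m - (k + m) = m - k - 1 + 1 := by omega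
    have e3 : 2 * m - (k + 1) = m - k - 1 + m := by omega
    have e4 : 2 * m - k = m - k - 1 + m + 1 := by omega
    rw [e1, e2, e3, e4]
    exact (alt_step_period cs i j (m - k - 1)).symm
  have hsplit : R = R.take m ++ R.take m := by
    conv_lhs => rw [← List.take_append_drop m R]
    congr 1
    apply List.ext_getElem
    · rw [List.length_drop, List.length_take]; omega
    · intro n h1 h2
      have hn : n < m := by
        rw [List.length_take] at h2; omega
      have hd : (R.drop m)[n] = R[m + n]'(by omega) := by
        rw [List.getElem_drop]
      have ht' : (R.take m)[n] = R[n]'(by omega) := by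
        rw [List.getElem_take]
      rw [hd, ht']
      have h3 : R[m + n]'(by omega) = R.getD (n + m) 1 := by
        rw [List.getD_eq_getElem R 1 (show n + m < R.length by omega)]
        congr 1
        omega
      rw [h3, hpair n hn, List.getD_eq_getElem R 1 (show n < R.length by omega)]
  have hcnt : R.count t = (R.take m).count t + (R.take m).count t := by
    conv_lhs => rw [hsplit]
    rw [List.count_append]
  exact ⟨(R.take m).count t, hcnt⟩

lemma stepWord_alt (i j : I) : ∀ n, stepWord cs (alternatingWord i j (2 * n)) = (step cs i * step cs j) ^ n := by
  intro n
  induction n with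
  | zero =>
    show stepWord cs (alternatingWord i j 0) = 1
    rw [show alternatingWord i j 0 = ([] : List I) from rfl, stepWord_nil]
  | succ n ih =>
    have h2 : 2 * (n + 1) = 2 * n + 1 + 1 := by ring
    have ha : alternatingWord i j (2 * n + 1 + 1) = i :: alternatingWord i j (2 * n + 1) := by
      rw [alternatingWord_succ']
      congr 1
      simp [Nat.even_add_one, parity_simps]
    have hb : alternatingWord i j (2 * n + 1) = j :: alternatingWord i j (2 * n) := by
      rw [alternatingWord_succ']
      congr 1
      simp
    rw [h2, ha, hb, stepWord_cons, stepWord_cons, ih, pow_succ', ← mul_assoc]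

lemma step_liftable : M.IsLiftable (step cs) := by
  intro i j
  rw [← stepWord_alt]
  funext p
  obtain ⟨t, ε⟩ := p
  show stepWord cs (alternatingWord i j (2 * M i j)) (t, ε) = (t, ε)
  rw [stepWord_apply]
  have hπ : π (alternatingWord i j (2 * M i j)) = 1 := by
    rw [pi_alt_even, cs.simple_mul_simple_pow]
  obtain ⟨c, hc⟩ := count_ris_alt_even cs i j t
  rw [hπ, hc]
  refine Prod.ext ?_ ?_
  · simp
  · show ε + ((c + c : ℕ) : ZMod 2) = ε
    push_cast
    rw [CharTwo.add_self_eq_zero, add_zero]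


/-- The reflection-cocycle homomorphism. -/
def phi : W →* Function.End (W × ZMod 2) := cs.lift ⟨step cs, step_liftable cs⟩

lemma phi_simple (i : I) : phi cs (s i) = step cs i := cs.lift_apply_simple _ i

lemma phi_wordProd (ω : List I) : phi cs (π ω) = stepWord cs ω := by
  induction ω with
  | nil =>
    rw [cs.wordProd_nil, map_one, stepWord_nil]
  | cons i ω ih => rw [cs.wordProd_cons, map_mul, phi_simple, ih, stepWord_cons]

/-- Parity of the number of occurrences of `t` in any inversion sequence for `w`. -/
def nu (w t : W) : ZMod 2 := (phi cs w (t, 0)).2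

lemma nu_wordProd (ω : List I) (t : W) :
    nu cs (π ω) t = ((cs.rightInvSeq ω).count t : ZMod 2) := by
  unfold nu
  rw [phi_wordProd, stepWord_apply, zero_add]

lemma phi_apply (w t : W) (ε : ZMod 2) :
    phi cs w (t, ε) = (w * t * w⁻¹, ε + nu cs w t) := by
  obtain ⟨ω, rfl⟩ := cs.wordProd_surjective w
  rw [phi_wordProd, stepWord_apply, nu_wordProd]

lemma nu_mul (u v t : W) : nu cs (u * v) t = nu cs v t + nu cs u (v * t * v⁻¹) := by
  unfold nu
  rw [map_mul]
  show (phi cs u (phi cs v (t, 0))).2 = _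
  rw [phi_apply cs v t 0, zero_add, phi_apply cs u]
  rfl

lemma nu_one (t : W) : nu cs 1 t = 0 := by
  unfold nu
  rw [map_one]
  rfl

lemma nu_simple (i : I) (t : W) : nu cs (s i) t = if t = s i then 1 else 0 := by
  have h := nu_wordProd cs [i] t
  rw [cs.wordProd_singleton] at h
  rw [h, cs.rightInvSeq_singleton]
  rcases eq_or_ne t (s i) with rfl | hne
  · rw [if_pos rfl]
    simp
  · rw [if_neg hne]
    have : (count t [s i]) = 0 := by
      rw [List.count_eq_zero]
      simp [hne]
    rw [this]
    simp

lemma nu_isReflection {w t : W} (h : nu cs w t = 1) : cs.IsReflection t := by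
  obtain ⟨ω, hω, rfl⟩ := cs.exists_reduced_word' w
  rw [nu_wordProd] at h
  have hne : (cs.rightInvSeq ω).count t ≠ 0 := by
    intro h0
    rw [h0] at h
    simp at h
  exact cs.isReflection_of_mem_rightInvSeq ω
    (List.count_pos_iff.mp (Nat.pos_of_ne_zero hne))

lemma nu_right_inversion {w t : W} (h : nu cs w t = 1) : ℓ (w * t) < ℓ w := by
  obtain ⟨ω, hω, rfl⟩ := cs.exists_reduced_word' w
  have h' := h
  rw [nu_wordProd] at h'
  have hne : (cs.rightInvSeq ω).count t ≠ 0 := by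
    intro h0
    rw [h0] at h'
    simp at h'
  exact (cs.isRightInversion_of_mem_rightInvSeq hω
    (List.count_pos_iff.mp (Nat.pos_of_ne_zero hne))).2

lemma nu_refl_self {t : W} (h : cs.IsReflection t) : nu cs t t = 1 := by
  obtain ⟨v, i, rfl⟩ := h
  have e0 : v * s i * v⁻¹ = v * (s i * v⁻¹) := by group
  have h1 := nu_mul cs v (s i * v⁻¹) (v * s i * v⁻¹)
  have e1 : s i * v⁻¹ * (v * s i * v⁻¹) * (s i * v⁻¹)⁻¹ = s i := by group
  have h2 := nu_mul cs (s i) v⁻¹ (v * s i * v⁻¹)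
  have e2 : v⁻¹ * (v * s i * v⁻¹) * v⁻¹⁻¹ = s i := by group
  have h3 := nu_mul cs v v⁻¹ (v * s i * v⁻¹)
  rw [mul_inv_cancel, nu_one, e2] at h3
  rw [e2, nu_simple, if_pos rfl] at h2
  rw [e1] at h1
  nth_rewrite 1 [e0]
  rw [h1, h2]
  linear_combination -h3

lemma nu_of_right_inversion {w t : W} (ht : cs.IsReflection t) (h : ℓ (w * t) < ℓ w) :
    nu cs w t = 1 := by
  by_contra hne
  have h0 : nu cs w t = 0 := by
    rcases (show ∀ x : ZMod 2, x = 0 ∨ x = 1 by decide) (nu cs w t) with h' | h'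
    · exact h'
    · exact absurd h' hne
  have h1 : nu cs (w * t) t = 1 := by
    rw [nu_mul]
    have e : t * t * t⁻¹ = t := by group
    rw [e, h0, nu_refl_self cs ht, add_zero]
  have h2 := nu_right_inversion cs h1
  rw [mul_assoc, ht.mul_self, mul_one] at h2
  omega

lemma length_eq_card [Fintype W] (w : W) :
    ℓ w = (Finset.univ.filter (fun t => nu cs w t = 1)).card := by
  obtain ⟨ω, hω, rfl⟩ := cs.exists_reduced_word' w
  have hset : (Finset.univ.filter (fun t => nu cs (π ω) t = 1)) = (cs.rightInvSeq ω).toFinset := by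
    ext t
    simp only [Finset.mem_filter, Finset.mem_univ, true_and, List.mem_toFinset]
    constructor
    · intro h
      rw [nu_wordProd] at h
      by_contra hmem
      rw [List.count_eq_zero.mpr hmem] at h
      simp at h
    · intro hmem
      rw [nu_wordProd, List.count_eq_one_of_mem hω.nodup_rightInvSeq hmem]
      simp
  rw [hset, List.toFinset_card_of_nodup hω.nodup_rightInvSeq, cs.length_rightInvSeq]
  exact hω

lemma nu_longest [Finite W] {w₀ : W} (hmax : ∀ w, ℓ w ≤ ℓ w₀) {t : W}
    (ht : cs.IsReflection t) : nu cs w₀ t = 1 :=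
  nu_of_right_inversion cs ht (lt_of_le_of_ne (hmax _) (ht.length_mul_left_ne w₀))

lemma length_mul_longest [Finite W] {w₀ : W} (hmax : ∀ w, ℓ w ≤ ℓ w₀) (x : W) :
    ℓ (x * w₀) + ℓ x = ℓ w₀ := by
  have _i : Fintype W := Fintype.ofFinite W
  set R : Finset W := Finset.univ.filter (fun t => cs.IsReflection t) with hR
  have hlen : ∀ w : W, ℓ w = (R.filter (fun t => nu cs w t = 1)).card := by
    intro w
    rw [length_eq_card cs w]
    congr 1
    ext t
    simp only [Finset.mem_filter, Finset.mem_univ, true_and, hR]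
    exact ⟨fun h => ⟨nu_isReflection cs h, h⟩, fun h => h.2⟩
  have h1 : R.filter (fun t => nu cs (x * w₀) t = 1)
      = R.filter (fun t => nu cs x (w₀ * t * w₀⁻¹) = 0) := by
    ext t
    simp only [Finset.mem_filter, hR, Finset.mem_univ, true_and]
    constructor
    · rintro ⟨htr, h⟩
      refine ⟨htr, ?_⟩
      rw [nu_mul, nu_longest cs hmax htr] at h
      linear_combination h
    · rintro ⟨htr, h⟩
      refine ⟨htr, ?_⟩
      rw [nu_mul, nu_longest cs hmax htr, h, add_zero]
  have h2 : (R.filter (fun t => nu cs x (w₀ * t * w₀⁻¹) = 0)).card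
      = (R.filter (fun t => nu cs x t = 0)).card := by
    apply Finset.card_bij (fun t _ => w₀ * t * w₀⁻¹)
    · intro t ht
      simp only [Finset.mem_filter, hR, Finset.mem_univ, true_and] at ht ⊢
      exact ⟨ht.1.conj w₀, ht.2⟩
    · intro a ha b hb hab
      have h' : w₀ * a = w₀ * b := mul_right_cancel hab
      exact mul_left_cancel h'
    · intro b hb
      simp only [Finset.mem_filter, hR, Finset.mem_univ, true_and] at hb
      refine ⟨w₀⁻¹ * b * w₀, ?_, by group⟩
      simp only [Finset.mem_filter, hR, Finset.mem_univ, true_and]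
      constructor
      · have := hb.1.conj w₀⁻¹
        rwa [inv_inv] at this
      · have e : w₀ * (w₀⁻¹ * b * w₀) * w₀⁻¹ = b := by group
        rw [e]
        exact hb.2
  have hcongr : R.filter (fun a => ¬ nu cs x a = 0) = R.filter (fun t => nu cs x t = 1) := by
    apply Finset.filter_congr
    intro t _
    have hy : ∀ y : ZMod 2, (¬(y = 0) ↔ y = 1) := by decide
    exact hy _
  have h3 : (R.filter (fun t => nu cs x t = 0)).card
      + (R.filter (fun a => ¬ nu cs x a = 0)).card = R.card :=
    Finset.card_filter_add_card_filter_not _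
  rw [hcongr] at h3
  have h4 : ℓ w₀ = R.card := by
    rw [hlen w₀]
    congr 1
    rw [Finset.filter_eq_self]
    intro t htR
    simp only [Finset.mem_filter, hR, Finset.mem_univ, true_and] at htR
    exact nu_longest cs hmax htR
  rw [hlen (x * w₀), h1, h2, hlen x, h4]
  omega

lemma length_longest_mul_inv [Finite W] {w₀ : W} (hmax : ∀ w, ℓ w ≤ ℓ w₀) (w : W) :
    ℓ (w₀ * w⁻¹) + ℓ w = ℓ w₀ := by
  have hmax' : ∀ u, ℓ u ≤ ℓ (w₀⁻¹) := by
    intro u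
    rw [cs.length_inv]
    exact hmax u
  have h := length_mul_longest cs hmax' w
  rw [show w * w₀⁻¹ = (w₀ * w⁻¹)⁻¹ by group] at h
  rw [cs.length_inv] at h
  rw [← cs.length_inv w₀⁻¹, inv_inv] at h
  exact h

lemma length_longest_mul_simple [Finite W] {w₀ : W} (hmax : ∀ w, ℓ w ≤ ℓ w₀) (i : I) :
    ℓ (w₀ * s i) + 1 = ℓ w₀ := by
  have h := length_longest_mul_inv cs hmax (s i)
  rw [cs.inv_simple] at h
  rw [← h, cs.length_simple]

lemma longest_conj_simple [Finite W] {w₀ : W} (hmax : ∀ w, ℓ w ≤ ℓ w₀) (i : I) :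
    ∃ j, w₀ * s i * w₀⁻¹ = s j := by
  have hmax' : ∀ u, ℓ u ≤ ℓ (w₀⁻¹) := by
    intro u
    rw [cs.length_inv]
    exact hmax u
  have h := length_mul_longest cs hmax' (w₀ * s i)
  have h5 := length_longest_mul_simple cs hmax i
  rw [cs.length_inv] at h
  have h6 : ℓ (w₀ * s i * w₀⁻¹) = 1 := by omega
  exact cs.length_eq_one_iff.mp h6



variable {C : Type*} {δ : C → C → W} (hbld : IsBuilding M cs δ)

include hbld

/-- Concatenation of galleries: if `ℓ (u * w) = ℓ u + ℓ w` then Weyl distances compose. -/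
lemma delta_concat : ∀ (n : ℕ) (w : W), ℓ w = n → ∀ (u : W) (x y z : C), δ x y = u →
    δ y z = w → ℓ (u * w) = ℓ u + ℓ w → δ x z = u * w := by
  intro n
  induction n using Nat.strong_induction_on with
  | _ n ih =>
    intro w hw u x y z hxy hyz hlen
    rcases eq_or_ne w 1 with rfl | hne
    · have hzy : y = z := (hbld.eq_one_iff y z).mp hyz
      subst hzy
      rw [mul_one]
      exact hxy
    · obtain ⟨i, hi⟩ := cs.exists_rightDescent_of_ne_one hne
      have h1 : ℓ (w * s i) + 1 = ℓ w := cs.isRightDescent_iff.mp hi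
      obtain ⟨z', hz'1, hz'2⟩ := hbld.wd3 y z i
      rw [hyz] at hz'2
      have hz'z : δ z' z = s i := by
        rw [hbld.symm z z', hz'1, cs.inv_simple]
      have hcanc : u * (w * s i) * s i = u * w := by
        rw [mul_assoc, cs.simple_mul_simple_cancel_right]
      have hws : ℓ (u * (w * s i)) = ℓ u + ℓ (w * s i) := by
        have hle : ℓ (u * (w * s i)) ≤ ℓ u + ℓ (w * s i) := cs.length_mul_le _ _
        have h3 := cs.length_mul_simple (u * (w * s i)) i
        rw [hcanc] at h3
        omega
      have ih' := ih (ℓ (w * s i)) (by omega) (w * s i) rfl u x y z' hxy hz'2 hws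
      have hlen2 : ℓ (δ x z' * s i) = ℓ (δ x z') + 1 := by
        rw [ih', hcanc]
        omega
      have hfin := hbld.wd2' x z' z i hz'z hlen2
      rw [ih'] at hfin
      rw [hfin, hcanc]

lemma panel_delta {i : I} {c d e : C} (hd : d ∈ panelRes cs δ i c)
    (he : e ∈ panelRes cs δ i c) : δ d e = 1 ∨ δ d e = s i := by
  rcases hd with hd | hd
  · have hdc : d = c := ((hbld.eq_one_iff c d).mp hd).symm
    subst hdc
    exact he
  · have hdc : δ d c = s i := by rw [hbld.symm c d, hd, cs.inv_simple]
    rcases he with he | he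
    · have hec : e = c := ((hbld.eq_one_iff c e).mp he).symm
      subst hec
      exact Or.inr hdc
    · rcases hbld.wd2 d c e i he with h' | h'
      · rw [hdc, cs.simple_mul_simple_self] at h'
        exact Or.inl h'
      · rw [hdc] at h'
        exact Or.inr h'

lemma panel_delta_ne {i : I} {c d e : C} (hd : d ∈ panelRes cs δ i c)
    (he : e ∈ panelRes cs δ i c) (hne : d ≠ e) : δ d e = s i := by
  rcases panel_delta cs hbld hd he with h' | h'
  · exact absurd ((hbld.eq_one_iff d e).mp h') hne
  · exact h'

end
end ThickAux

/-- Let `B` be a spherical building and `A ⊆ B` an apartment. If every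
panel of `A` is contained in at least three distinct chambers of `B`, then `B` is thick. -/
theorem thick_of_thick_apartment
    {I W C : Type*} [Group W] {M : CoxeterMatrix I} (cs : CoxeterSystem M W)
    (δ : C → C → W) (hbld : IsBuilding M cs δ)
    (hspherical : Finite W)
    (A : Set C) (hA : IsBuildingApartment δ A)
    (h : ∀ c ∈ A, ∀ i : I, ∃ d₁ d₂ d₃ : C, d₁ ≠ d₂ ∧ d₁ ≠ d₃ ∧ d₂ ≠ d₃ ∧
      d₁ ∈ panelRes cs δ i c ∧ d₂ ∈ panelRes cs δ i c ∧ d₃ ∈ panelRes cs δ i c) :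
    IsThickBuilding cs δ := by
  classical
  intro i c
  obtain ⟨α, hα, hAr⟩ := hA
  obtain ⟨w₀, hmax⟩ := Finite.exists_max (fun w => cs.length w)
  set w : W := δ (α 1) c with hw
  set u : W := w₀ * w⁻¹ with hu
  have hlu : cs.length u + cs.length w = cs.length w₀ :=
    ThickAux.length_longest_mul_inv cs hmax w
  have hau : δ (α u⁻¹) (α 1) = u := by rw [hα]; group
  have hac : δ (α u⁻¹) c = w₀ := by
    have huw : u * w = w₀ := by rw [hu]; group
    have hl2 : cs.length (u * w) = cs.length u + cs.length w := by rw [huw]; omega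
    have := ThickAux.delta_concat cs hbld (cs.length w) w rfl u (α u⁻¹) (α 1) c hau hw.symm hl2
    rw [huw] at this
    exact this
  have haA : α u⁻¹ ∈ A := by rw [hAr]; exact ⟨u⁻¹, rfl⟩
  obtain ⟨j, hj⟩ := ThickAux.longest_conj_simple cs hmax i
  have hjw : cs.simple j * w₀ = w₀ * cs.simple i := by rw [← hj]; group
  have hwinv : w₀⁻¹ * cs.simple j = cs.simple i * w₀⁻¹ := by
    have h' := congrArg (fun z => z⁻¹) hjw
    simp only [mul_inv_rev, cs.inv_simple] at h'
    exact h'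
  obtain ⟨d₁, d₂, d₃, h12, h13, h23, hm1, hm2, hm3⟩ := h (α u⁻¹) haA j
  have hproj : ∀ d ∈ panelRes cs δ j (α u⁻¹),
      ∃ e, e ∈ panelRes cs δ i c ∧ δ d e = w₀ * cs.simple i := by
    intro d hd
    have hstep : δ d c = w₀ ∨ δ d c = w₀ * cs.simple i := by
      rcases hd with hd | hd
      · have hda : d = α u⁻¹ := ((hbld.eq_one_iff _ d).mp hd).symm
        subst hda
        exact Or.inl hac
      · have hca : δ c (α u⁻¹) = w₀⁻¹ := by rw [hbld.symm (α u⁻¹) c, hac]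
        rcases hbld.wd2 c (α u⁻¹) d j hd with h' | h'
        · right
          rw [hca] at h'
          rw [hbld.symm c d, h', mul_inv_rev, cs.inv_simple, inv_inv, hjw]
        · left
          rw [hca] at h'
          rw [hbld.symm c d, h', inv_inv]
    rcases hstep with hdc | hdc
    · obtain ⟨e, he1, he2⟩ := hbld.wd3 d c i
      exact ⟨e, Or.inr he1, by rw [he2, hdc]⟩
    · exact ⟨c, Or.inl ((hbld.eq_one_iff c c).mpr rfl), hdc⟩
  have hinj : ∀ d d' e, d ∈ panelRes cs δ j (α u⁻¹) → d' ∈ panelRes cs δ j (α u⁻¹) →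
      d ≠ d' → δ d e = w₀ * cs.simple i → δ d' e = w₀ * cs.simple i → False := by
    intro d d' e hd hd' hne hde hd'e
    have hdd' : δ d d' = cs.simple j := ThickAux.panel_delta_ne cs hbld hd hd' hne
    have hed : δ e d = (w₀ * cs.simple i)⁻¹ := by rw [hbld.symm d e, hde]
    have he1 : (w₀ * cs.simple i)⁻¹ * cs.simple j = w₀⁻¹ := by
      rw [mul_inv_rev, cs.inv_simple, mul_assoc, hwinv, ← mul_assoc,
        cs.simple_mul_simple_self, one_mul]
    have hlen1 : cs.length (δ e d * cs.simple j) = cs.length (δ e d) + 1 := by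
      rw [hed, he1, cs.length_inv, cs.length_inv]
      have := ThickAux.length_longest_mul_simple cs hmax i
      omega
    have hfin := hbld.wd2' e d d' j hdd' hlen1
    rw [hed, he1] at hfin
    have hed' : δ e d' = (w₀ * cs.simple i)⁻¹ := by rw [hbld.symm d' e, hd'e]
    rw [hed'] at hfin
    have hsj : w₀ * cs.simple i = w₀ := by
      have := congrArg (fun z => z⁻¹) hfin
      simpa using this
    have : cs.simple i = 1 := by
      have h3 : w₀ * cs.simple i = w₀ * 1 := by rw [mul_one]; exact hsj
      exact mul_left_cancel h3
    have h2 := cs.length_simple i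
    rw [this, cs.length_one] at h2
    omega
  obtain ⟨e₁, he₁, hde₁⟩ := hproj d₁ hm1
  obtain ⟨e₂, he₂, hde₂⟩ := hproj d₂ hm2
  obtain ⟨e₃, he₃, hde₃⟩ := hproj d₃ hm3
  refine ⟨e₁, e₂, e₃, ?_, ?_, ?_, he₁, he₂, he₃⟩
  · intro hE
    exact hinj d₁ d₂ e₁ hm1 hm2 h12 hde₁ (by rw [hE]; exact hde₂)
  · intro hE
    exact hinj d₁ d₃ e₁ hm1 hm3 h13 hde₁ (by rw [hE]; exact hde₃)
  · intro hE
    exact hinj d₂ d₃ e₂ hm2 hm3 h23 hde₂ (by rw [hE]; exact hde₃)
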